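/- arXiv:1708.04754 — 3 statements merged into one kernel-verified Lean document; each statement's English description precedes it below -/
import Mathlib

section
/- The list operational-transformation functions satisfy CP1 for an insert and a delete: for any list σ, insertion o1 = Ins(a, p1) and deletion o2 = Del(p2) with p1, p2 within bounds (p1 ≤ length σ, p2 < length σ), applying o1 then OT(o2, o1) yields the same list as applying o2 then OT(o1, o2), where OT(Ins(a,p1), Del(p2)) = Ins(a,p1) if p1 ≤ p2 else Ins(a,p1−1), and OT(Del(p2), Ins(a,p1)) = Del(p2) if p2 < p1 else Del(p2+1). -/
/-- Insert `a` at position `p` in list `σ`. -/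
def insL {U : Type*} (a : U) (p : ℕ) (σ : List U) : List U :=
  σ.take p ++ a :: σ.drop p

/-- Delete the element at position `p` of list `σ`. -/
def delL {U : Type*} (p : ℕ) (σ : List U) : List U :=
  σ.take p ++ σ.drop (p + 1)

theorem cp1_ins_del {U : Type*} (σ : List U) (a : U) (p1 p2 : ℕ)
    (h1 : p1 ≤ σ.length) (h2 : p2 < σ.length) :
    delL (if p2 < p1 then p2 else p2 + 1) (insL a p1 σ) =
    insL a (if p1 ≤ p2 then p1 else p1 - 1) (delL p2 σ) := by
  induction σ generalizing p1 p2 with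
  | nil => simp at h2
  | cons x xs ih =>
    match p1, p2 with
    | 0, 0 => simp [insL, delL]
    | 0, p2+1 => simp [insL, delL]
    | p1+1, 0 => simp [insL, delL]
    | p1+1, p2+1 =>
      have h1' : p1 ≤ xs.length := by simpa using h1
      have h2' : p2 < xs.length := by simpa using h2
      have H := ih p1 p2 h1' h2'
      by_cases h : p2 < p1
      · obtain ⟨q, rfl⟩ : ∃ q, p1 = q + 1 := ⟨p1 - 1, by omega⟩
        simp only [if_pos h, if_neg (by omega : ¬ q + 1 ≤ p2), Nat.add_sub_cancel] at H
        simp only [if_pos (by omega : p2+1 < q+1+1), if_neg (by omega : ¬ q+1+1 ≤ p2+1),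
          Nat.add_sub_cancel]
        simpa [insL, delL] using congrArg (x :: ·) H
      · simp only [if_neg h, if_pos (by omega : p1 ≤ p2)] at H
        simp only [if_neg (by omega : ¬ p2+1 < p1+1), if_pos (by omega : p1+1 ≤ p2+1)]
        simpa [insL, delL] using congrArg (x :: ·) H
end

section
/- The list operational-transformation functions satisfy CP1 for two deletes: for any list σ and deletions o1 = Del(p1), o2 = Del(p2) with p1, p2 < length σ, applying o1 then OT(o2, o1) yields the same list as applying o2 then OT(o1, o2), where OT(Del(p1), Del(p2)) = Del(p1) if p1 < p2, Del(p1−1) if p1 > p2, and NOP (identity) if p1 = p2. -/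
/-- Apply the transform of `Del p` against a concurrent `Del q`:
`Del p` if `p < q`, `Del (p-1)` if `p > q`, and NOP (identity) if `p = q`. -/
def applyDelT {U : Type*} (p q : ℕ) (σ : List U) : List U :=
  if p < q then delL p σ
  else if q < p then delL (p - 1) σ
  else σ

theorem delL_nil {U : Type*} (p : ℕ) : delL p ([] : List U) = [] := by
  simp [delL]

theorem delL_zero {U : Type*} (l : List U) : delL 0 l = l.drop 1 := by
  simp [delL]

theorem delL_succ_cons {U : Type*} (a : U) (t : List U) (n : ℕ) :
    delL (n + 1) (a :: t) = a :: delL n t := by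
  simp [delL]

theorem delL_comm {U : Type*} (σ : List U) (p q : ℕ) (h : p < q) :
    delL p (delL q σ) = delL (q - 1) (delL p σ) := by
  induction σ generalizing p q with
  | nil => simp [delL_nil]
  | cons a t ih =>
    obtain ⟨q, rfl⟩ : ∃ q', q = q' + 1 := ⟨q - 1, by omega⟩
    cases p with
    | zero =>
      simp [delL_zero, delL_succ_cons]
    | succ p =>
      obtain ⟨q, rfl⟩ : ∃ q', q = q' + 1 := ⟨q - 1, by omega⟩
      simp only [delL_succ_cons, Nat.add_sub_cancel]
      rw [ih p (q + 1) (by omega)]; norm_num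

theorem cp1_del_del {U : Type*} (σ : List U) (p1 p2 : ℕ)
    (h1 : p1 < σ.length) (h2 : p2 < σ.length) :
    applyDelT p2 p1 (delL p1 σ) = applyDelT p1 p2 (delL p2 σ) := by
  rcases lt_trichotomy p1 p2 with h | h | h
  · simp only [applyDelT, if_pos h, if_neg (lt_asymm h), if_pos h]
    exact (delL_comm σ p1 p2 h).symm
  · subst h; simp [applyDelT]
  · simp only [applyDelT, if_pos h, if_neg (lt_asymm h), if_pos h]
    exact delL_comm σ p2 p1 h
end

section
/- One-step compatibility: if duplicate-free lists v and v' are compatible, and v'' is obtained from v' by applying a single list operation (insertion of an element not occurring in v, or deletion of an element), then v and v'' are compatible. -/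
/-- Two lists are compatible: relative order of common elements agrees. -/
def Compatible {U : Type*} [DecidableEq U] (w1 w2 : List U) : Prop :=
  ∀ a b : U, a ∈ w1 → b ∈ w1 → a ∈ w2 → b ∈ w2 →
    (w1.idxOf a < w1.idxOf b ↔ w2.idxOf a < w2.idxOf b)

/-- List operations. -/
inductive LOp (U : Type*) where
  | ins (x : U) (p : ℕ)
  | del (p : ℕ)

/-- Apply a list operation. -/
def applyOp {U : Type*} : LOp U → List U → List U
  | .ins x p, σ => σ.take p ++ x :: σ.drop p
  | .del p, σ => σ.take p ++ σ.drop (p + 1)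

lemma pair_sublist_iff {U : Type*} [DecidableEq U] {l : List U} (h : l.Nodup) {a b : U}
    (ha : a ∈ l) (hb : b ∈ l) (hab : a ≠ b) :
    l.idxOf a < l.idxOf b ↔ List.Sublist [a, b] l := by
  induction l with
  | nil => simp at ha
  | cons c l ih =>
    rw [List.nodup_cons] at h
    by_cases hac : a = c
    · subst hac
      have hbl : b ∈ l := by
        rcases List.mem_cons.1 hb with h' | h'
        · exact absurd h'.symm hab
        · exact h'
      constructor
      · intro _
        exact List.Sublist.cons₂ a ((List.singleton_sublist).2 hbl)
      · intro _
        rw [List.idxOf_cons_self, List.idxOf_cons_ne _ hab]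
        exact Nat.succ_pos _
    · by_cases hbc : b = c
      · subst hbc
        constructor
        · intro hlt
          rw [List.idxOf_cons_self, List.idxOf_cons_ne _ (fun h' => hac h'.symm)] at hlt
          omega
        · intro hs
          exfalso
          cases hs with
          | cons _ hs' => exact h.1 (hs'.subset (by simp))
          | cons_cons _ hs' => exact hac rfl
      · have hal : a ∈ l := by
          rcases List.mem_cons.1 ha with h' | h'
          · exact absurd h' hac
          · exact h'
        have hbl : b ∈ l := by
          rcases List.mem_cons.1 hb with h' | h'
          · exact absurd h' hbc
          · exact h'
        rw [List.idxOf_cons_ne _ (fun h' => hac h'.symm),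
            List.idxOf_cons_ne _ (fun h' => hbc h'.symm)]
        rw [Nat.succ_lt_succ_iff, ih h.2 hal hbl]
        constructor
        · intro hs; exact hs.cons c
        · intro hs
          cases hs with
          | cons _ hs' => exact hs'
          | cons_cons _ hs' => exact absurd rfl hac

lemma order_of_sublist {U : Type*} [DecidableEq U] {l l' : List U} (hs : List.Sublist l l')
    (h' : l'.Nodup) {a b : U} (ha : a ∈ l) (hb : b ∈ l) :
    l.idxOf a < l.idxOf b ↔ l'.idxOf a < l'.idxOf b := by
  have h : l.Nodup := h'.sublist hs
  by_cases hab : a = b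
  · subst hab; simp
  · rw [pair_sublist_iff h ha hb hab, pair_sublist_iff h' (hs.subset ha) (hs.subset hb) hab]
    constructor
    · intro hp; exact hp.trans hs
    · intro hp
      -- a,b ∈ l, a≠b, so [a,b] <+ l or [b,a] <+ l
      rcases (lt_or_gt_of_ne (fun he : l.idxOf a = l.idxOf b =>
        hab ((List.idxOf_inj ha).1 he))) with hlt | hgt
      · exact (pair_sublist_iff h ha hb hab).1 hlt
      · exfalso
        have hba : List.Sublist [b, a] l' :=
          ((pair_sublist_iff h hb ha (Ne.symm hab)).1 hgt).trans hs
        have h1 : l'.idxOf a < l'.idxOf b :=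
          (pair_sublist_iff h' (hs.subset ha) (hs.subset hb) hab).2 hp
        have h2 : l'.idxOf b < l'.idxOf a :=
          (pair_sublist_iff h' (hs.subset hb) (hs.subset ha) (Ne.symm hab)).2 hba
        omega

theorem one_step_compatibility {U : Type*} [DecidableEq U]
    (v v' : List U) (hv : v.Nodup) (hv' : v'.Nodup)
    (hcompat : Compatible v v') (op : LOp U)
    (hop : match op with
      | .ins x _ => x ∉ v ∧ x ∉ v'
      | .del p => p < v'.length) :
    Compatible v (applyOp op v') := by
  cases op with
  | ins x p =>
    obtain ⟨hxv, hxv'⟩ := hop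
    intro a b ha hb ha'' hb''
    simp only [applyOp] at *
    have hperm : List.Perm (v'.take p ++ x :: v'.drop p) (x :: v') := by
      simpa using List.perm_middle.trans (by rw [List.take_append_drop])
    have hsub : List.Sublist v' (v'.take p ++ x :: v'.drop p) := by
      conv_lhs => rw [← List.take_append_drop p v']
      exact List.Sublist.append (List.Sublist.refl _) (List.sublist_cons_self _ _)
    have hnodup : (v'.take p ++ x :: v'.drop p).Nodup :=
      hperm.nodup_iff.2 (List.nodup_cons.2 ⟨hxv', hv'⟩)
    have haM : a ∈ v' := by
      rcases List.mem_cons.1 (hperm.mem_iff.1 ha'') with h | h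
      · exact absurd (h ▸ ha) hxv
      · exact h
    have hbM : b ∈ v' := by
      rcases List.mem_cons.1 (hperm.mem_iff.1 hb'') with h | h
      · exact absurd (h ▸ hb) hxv
      · exact h
    rw [hcompat a b ha hb haM hbM]
    exact order_of_sublist hsub hnodup haM hbM
  | del p =>
    intro a b ha hb ha'' hb''
    simp only [applyOp] at *
    have hsub : List.Sublist (v'.take p ++ v'.drop (p + 1)) v' := by
      conv_rhs => rw [← List.take_append_drop p v']
      refine List.Sublist.append (List.Sublist.refl _) ?_
      rw [← List.drop_drop]
      exact List.drop_sublist 1 _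
    rw [hcompat a b ha hb (hsub.subset ha'') (hsub.subset hb'')]
    exact (order_of_sublist hsub hv' ha'' hb'').symm
end
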